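/- Let L, R : C(I,ℂⁿ) → ℂⁿ be continuous linear, and suppose L is strictly delayed: there is Δ ∈ (0,h) with Lφ = 0 whenever φ(t) = 0 on [-h,-Δ]. Then for every φ ∈ C(I,ℂⁿ) there exists a unique continuous v : [-h,∞) → ℂⁿ with v_0 = φ such that t ↦ v(t) - L(v_t) is differentiable on [0,∞) with derivative R(v_t); moreover each solution operator S(t) : φ ↦ v_t is a continuous linear map C(I,ℂⁿ) → C(I,ℂⁿ). -/

import Mathlib

open MeasureTheory Filter Topology

/-- A (classical) solution of the neutral equation `d/dt [v(t) - L v_t] = R v_t`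
with initial condition `v_0 = φ`: `v` is continuous on `[-h,∞)`, `v_0 = φ`, and
`t ↦ v(t) - L v_t` is differentiable on `[0,∞)` with derivative `R v_t`
(`V t` is the segment `v_t` as a continuous map, for `t ≥ 0`). -/
def IsNeutralSol (n : ℕ) (h : ℝ)
    (L R : C(Set.Icc (-h) (0:ℝ), Fin n → ℂ) →L[ℂ] (Fin n → ℂ))
    (φ : C(Set.Icc (-h) (0:ℝ), Fin n → ℂ)) (v : ℝ → Fin n → ℂ) : Prop :=
  ContinuousOn v (Set.Ici (-h)) ∧ (∀ s : Set.Icc (-h) (0:ℝ), v ↑s = φ s) ∧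
  ∃ V : ℝ → C(Set.Icc (-h) (0:ℝ), Fin n → ℂ),
    (∀ t, 0 ≤ t → ∀ s : Set.Icc (-h) (0:ℝ), V t s = v (t + ↑s)) ∧
    (∀ t, 0 ≤ t → HasDerivWithinAt (fun τ => v τ - L (V τ)) (R (V t)) (Set.Ici 0) t)

open MeasureTheory Filter Topology Set NNReal

noncomputable section Stmt14Aux

variable {n : ℕ} {h Δ T k : ℝ}

/-- segments of a continuous function on ℝ -/
def segMap (h : ℝ) (v : C(ℝ, Fin n → ℂ)) : C(ℝ, C(Set.Icc (-h) (0:ℝ), Fin n → ℂ)) :=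
  ContinuousMap.curry ⟨fun p => v (p.1 + p.2.1),
    v.continuous.comp (continuous_fst.add (continuous_subtype_val.comp continuous_snd))⟩

@[simp] lemma segMap_apply (v : C(ℝ, Fin n → ℂ)) (t : ℝ) (s : Set.Icc (-h) (0:ℝ)) :
    segMap h v t s = v (t + s) := rfl

lemma segMap_sub (v w : C(ℝ, Fin n → ℂ)) (t : ℝ) :
    segMap h (v - w) t = segMap h v t - segMap h w t := by
  ext s; simp [segMap]

/-- extension of initial data `φ` by a forward path `y` -/
def extMap (hh : -h ≤ (0:ℝ)) (hT : (0:ℝ) ≤ T) (φ : C(Set.Icc (-h) (0:ℝ), Fin n → ℂ))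
    (y : C(Set.Icc (0:ℝ) T, Fin n → ℂ)) : C(ℝ, Fin n → ℂ) :=
  ⟨fun t => φ (Set.projIcc (-h) 0 hh (min t 0)) + y (Set.projIcc 0 T hT (max t 0)),
    (φ.continuous.comp (continuous_projIcc.comp (continuous_id.min continuous_const))).add
      (y.continuous.comp (continuous_projIcc.comp (continuous_id.max continuous_const)))⟩

lemma extMap_apply (hh : -h ≤ (0:ℝ)) (hT : (0:ℝ) ≤ T) (φ : C(Set.Icc (-h) (0:ℝ), Fin n → ℂ))
    (y : C(Set.Icc (0:ℝ) T, Fin n → ℂ)) (t : ℝ) :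
    extMap hh hT φ y t
      = φ (Set.projIcc (-h) 0 hh (min t 0)) + y (Set.projIcc 0 T hT (max t 0)) := rfl

lemma extMap_nonpos (hh : -h ≤ (0:ℝ)) (hT : (0:ℝ) ≤ T) (φ : C(Set.Icc (-h) (0:ℝ), Fin n → ℂ))
    (y : C(Set.Icc (0:ℝ) T, Fin n → ℂ)) (hy : y ⟨0, left_mem_Icc.2 hT⟩ = 0) {t : ℝ}
    (ht : t ≤ 0) : extMap hh hT φ y t = φ (Set.projIcc (-h) 0 hh t) := by
  rw [extMap_apply, min_eq_left ht, max_eq_right ht, Set.projIcc_left, hy, add_zero]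

lemma extMap_of_mem (hh : -h ≤ (0:ℝ)) (hT : (0:ℝ) ≤ T) (φ : C(Set.Icc (-h) (0:ℝ), Fin n → ℂ))
    (y : C(Set.Icc (0:ℝ) T, Fin n → ℂ)) {t : ℝ} (ht : t ∈ Set.Icc (0:ℝ) T) :
    extMap hh hT φ y t = φ ⟨0, Set.right_mem_Icc.2 hh⟩ + y ⟨t, ht⟩ := by
  rw [extMap_apply, min_eq_right ht.1, max_eq_left ht.1, Set.projIcc_of_mem hh (by simp [hh]),
    Set.projIcc_of_mem hT ht]


section Est
variable (L : C(Set.Icc (-h) (0:ℝ), Fin n → ℂ) →L[ℂ] (Fin n → ℂ))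

/-- `L` only sees values at times `≤ -Δ`. -/
lemma norm_L_apply_le (hh : -h ≤ (0:ℝ)) (hΔ : Δ ∈ Set.Ioo 0 h)
    (hL : ∀ φ : C(Set.Icc (-h) (0:ℝ), Fin n → ℂ),
      (∀ s : Set.Icc (-h) (0:ℝ), (↑s : ℝ) ≤ -Δ → φ s = 0) → L φ = 0)
    (ψ : C(Set.Icc (-h) (0:ℝ), Fin n → ℂ)) {c : ℝ} (hc : 0 ≤ c)
    (hψ : ∀ s : Set.Icc (-h) (0:ℝ), (↑s : ℝ) ≤ -Δ → ‖ψ s‖ ≤ c) :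
    ‖L ψ‖ ≤ ‖L‖ * c := by
  have hmem : ∀ s : Set.Icc (-h) (0:ℝ), min (↑s) (-Δ) ∈ Set.Icc (-h) (0:ℝ) := fun s =>
    ⟨le_min s.2.1 (neg_le_neg hΔ.2.le), (min_le_right _ _).trans (by linarith [hΔ.1])⟩
  set ψ₁ : C(Set.Icc (-h) (0:ℝ), Fin n → ℂ) :=
    ⟨fun s => ψ ⟨min (↑s) (-Δ), hmem s⟩,
      ψ.continuous.comp (Continuous.subtype_mk
        ((continuous_subtype_val.min continuous_const)) _)⟩ with hψ₁
  have h0 : L (ψ - ψ₁) = 0 := by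
    refine hL _ fun s hs => ?_
    have : min (↑s : ℝ) (-Δ) = (s : ℝ) := min_eq_left hs
    simp only [ContinuousMap.sub_apply, hψ₁, ContinuousMap.coe_mk]
    rw [show (⟨min (↑s) (-Δ), hmem s⟩ : Set.Icc (-h) (0:ℝ)) = s from Subtype.ext this, sub_self]
  have hLψ : L ψ = L ψ₁ := by
    have h1 := map_sub L ψ ψ₁
    rw [h0] at h1
    exact sub_eq_zero.mp h1.symm
  rw [hLψ]
  refine (L.le_opNorm ψ₁).trans (mul_le_mul_of_nonneg_left ?_ (norm_nonneg L))
  rw [ContinuousMap.norm_le _ hc]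
  intro s
  exact hψ ⟨min (↑s) (-Δ), hmem s⟩ (min_le_right _ _)

/-- exponential-weight bound for the primitive -/
lemma norm_integral_exp_le {f : ℝ → Fin n → ℂ} (hf : Continuous f) {c t : ℝ} (hk : 0 < k)
    (ht : 0 ≤ t) (hc : 0 ≤ c) (hb : ∀ s ∈ Set.Icc (0:ℝ) t, ‖f s‖ ≤ c * Real.exp (k * s)) :
    ‖∫ s in (0:ℝ)..t, f s‖ ≤ c / k * Real.exp (k * t) := by
  have hg : IntervalIntegrable (fun s => c * Real.exp (k * s)) volume 0 t :=
    (Continuous.intervalIntegrable (by continuity) _ _)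
  have h1 : ‖∫ s in (0:ℝ)..t, f s‖ ≤ |∫ s in (0:ℝ)..t, c * Real.exp (k * s)| := by
    refine intervalIntegral.norm_integral_le_abs_of_norm_le ?_ hg
    refine (MeasureTheory.ae_restrict_iff' measurableSet_uIoc).2 (MeasureTheory.ae_of_all _ ?_)
    intro s hs
    rw [Set.uIoc_of_le ht] at hs
    exact hb s ⟨hs.1.le, hs.2⟩
  have h2 : (∫ s in (0:ℝ)..t, c * Real.exp (k * s))
      = c * (k⁻¹ * (Real.exp (k * t) - Real.exp (k * 0))) := by
    rw [intervalIntegral.integral_const_mul]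
    congr 1
    rw [intervalIntegral.integral_comp_mul_left Real.exp hk.ne', mul_zero, integral_exp,
      smul_eq_mul]
  refine h1.trans ?_
  rw [h2, abs_of_nonneg]
  · rw [mul_zero, Real.exp_zero, div_eq_mul_inv]
    have : Real.exp (k * t) - 1 ≤ Real.exp (k * t) := by
      have := Real.exp_pos (k * t); linarith
    calc c * (k⁻¹ * (Real.exp (k * t) - 1)) ≤ c * (k⁻¹ * Real.exp (k * t)) := by
          have hki : (0:ℝ) ≤ k⁻¹ := inv_nonneg.2 hk.le
          exact mul_le_mul_of_nonneg_left (mul_le_mul_of_nonneg_left this hki) hc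
      _ = c * k⁻¹ * Real.exp (k * t) := by ring
  · have h3 : Real.exp (k * 0) ≤ Real.exp (k * t) :=
      Real.exp_le_exp.2 (by nlinarith)
    have hki : (0:ℝ) ≤ k⁻¹ := inv_nonneg.2 hk.le
    exact mul_nonneg hc (mul_nonneg hki (sub_nonneg.2 h3))
end Est

section Op
variable (L R : C(Set.Icc (-h) (0:ℝ), Fin n → ℂ) →L[ℂ] (Fin n → ℂ))

/-- right-hand side of the integral equation -/
def rhsF (hh : -h ≤ (0:ℝ)) (hT : (0:ℝ) ≤ T) (φ : C(Set.Icc (-h) (0:ℝ), Fin n → ℂ))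
    (y : C(Set.Icc (0:ℝ) T, Fin n → ℂ)) : ℝ → Fin n → ℂ :=
  fun t => L (segMap h (extMap hh hT φ y) t) - L φ
    + ∫ s in (0:ℝ)..t, R (segMap h (extMap hh hT φ y) s)

lemma continuous_rhsF (hh : -h ≤ (0:ℝ)) (hT : (0:ℝ) ≤ T)
    (φ : C(Set.Icc (-h) (0:ℝ), Fin n → ℂ)) (y : C(Set.Icc (0:ℝ) T, Fin n → ℂ)) :
    Continuous (rhsF L R hh hT φ y) := by
  refine Continuous.add ?_ ?_
  · exact (L.continuous.comp (segMap h (extMap hh hT φ y)).continuous).sub continuous_const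
  · exact intervalIntegral.continuous_primitive
      (fun a b => Continuous.intervalIntegrable
        (R.continuous.comp (segMap h (extMap hh hT φ y)).continuous) a b) 0

/-- multiplication by `exp (k t)` -/
def mulExp (k : ℝ) (hT : (0:ℝ) ≤ T) (w : C(Set.Icc (0:ℝ) T, Fin n → ℂ)) :
    C(Set.Icc (0:ℝ) T, Fin n → ℂ) :=
  ⟨fun t => Real.exp (k * ↑t) • w t,
    (Real.continuous_exp.comp (continuous_const.mul continuous_subtype_val)).smul w.continuous⟩

@[simp] lemma mulExp_apply (hT : (0:ℝ) ≤ T) (w : C(Set.Icc (0:ℝ) T, Fin n → ℂ))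
    (t : Set.Icc (0:ℝ) T) : mulExp k hT w t = Real.exp (k * ↑t) • w t := rfl

/-- the conjugated Picard operator -/
def Psi (hh : -h ≤ (0:ℝ)) (hT : (0:ℝ) ≤ T) (k : ℝ) (φ : C(Set.Icc (-h) (0:ℝ), Fin n → ℂ))
    (w : C(Set.Icc (0:ℝ) T, Fin n → ℂ)) : C(Set.Icc (0:ℝ) T, Fin n → ℂ) :=
  ⟨fun t => Real.exp (-(k * ↑t)) • rhsF L R hh hT φ (mulExp k hT w) t,
    ((Real.continuous_exp.comp (continuous_const.mul continuous_subtype_val).neg)).smul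
      ((continuous_rhsF L R hh hT φ (mulExp k hT w)).comp continuous_subtype_val)⟩

@[simp] lemma Psi_apply (hh : -h ≤ (0:ℝ)) (hT : (0:ℝ) ≤ T) (k : ℝ)
    (φ : C(Set.Icc (-h) (0:ℝ), Fin n → ℂ)) (w : C(Set.Icc (0:ℝ) T, Fin n → ℂ))
    (t : Set.Icc (0:ℝ) T) :
    Psi L R hh hT k φ w t = Real.exp (-(k * ↑t)) • rhsF L R hh hT φ (mulExp k hT w) t := rfl

lemma extMap_sub (hh : -h ≤ (0:ℝ)) (hT : (0:ℝ) ≤ T) (φ : C(Set.Icc (-h) (0:ℝ), Fin n → ℂ))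
    (y y' : C(Set.Icc (0:ℝ) T, Fin n → ℂ)) (τ : ℝ) :
    (extMap hh hT φ y - extMap hh hT φ y') τ
      = y (Set.projIcc 0 T hT (max τ 0)) - y' (Set.projIcc 0 T hT (max τ 0)) := by
  simp [extMap_apply]

lemma seg_ext_zero (hh : -h ≤ (0:ℝ)) (hT : (0:ℝ) ≤ T) (φ : C(Set.Icc (-h) (0:ℝ), Fin n → ℂ))
    (y : C(Set.Icc (0:ℝ) T, Fin n → ℂ)) (hy : y ⟨0, Set.left_mem_Icc.2 hT⟩ = 0) :
    segMap h (extMap hh hT φ y) 0 = φ := by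
  ext s
  rw [segMap_apply, zero_add, extMap_nonpos hh hT φ y hy s.2.2,
    Set.projIcc_of_mem hh s.2]

lemma dist_Psi_le (hh : -h ≤ (0:ℝ)) (hT : (0:ℝ) ≤ T) (hk : 0 < k) (hΔ : Δ ∈ Set.Ioo 0 h)
    (hL : ∀ φ : C(Set.Icc (-h) (0:ℝ), Fin n → ℂ),
      (∀ s : Set.Icc (-h) (0:ℝ), (↑s : ℝ) ≤ -Δ → φ s = 0) → L φ = 0)
    (φ : C(Set.Icc (-h) (0:ℝ), Fin n → ℂ)) (w w' : C(Set.Icc (0:ℝ) T, Fin n → ℂ))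
    (hw : w ⟨0, Set.left_mem_Icc.2 hT⟩ = w' ⟨0, Set.left_mem_Icc.2 hT⟩) :
    dist (Psi L R hh hT k φ w) (Psi L R hh hT k φ w')
      ≤ (‖L‖ * Real.exp (-(k * Δ)) + ‖R‖ / k) * dist w w' := by
  set D := dist w w' with hDdef
  have hD : 0 ≤ D := dist_nonneg
  set y := mulExp k hT w with hy
  set y' := mulExp k hT w' with hy'
  set d : C(ℝ, Fin n → ℂ) := extMap hh hT φ y - extMap hh hT φ y' with hd
  -- pointwise bounds on d
  have hd0 : ∀ τ : ℝ, τ ≤ 0 → d τ = 0 := by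
    intro τ hτ
    rw [hd, extMap_sub, max_eq_right hτ, Set.projIcc_left]
    simp [hy, hy', hw]
  have hd1 : ∀ τ : ℝ, ‖d τ‖ ≤ Real.exp (k * max τ 0) * D := by
    intro τ
    rcases le_or_gt τ 0 with hτ | hτ
    · rw [hd0 τ hτ]; simp [mul_nonneg (Real.exp_pos _).le hD]
    · rw [hd, extMap_sub]
      set p := Set.projIcc 0 T hT (max τ 0) with hp
      have hpτ : (p : ℝ) ≤ max τ 0 := by
        rw [hp, Set.coe_projIcc]
        exact max_le (le_max_right τ 0) (min_le_right T _)
      have : ‖y p - y' p‖ = Real.exp (k * ↑p) * ‖w p - w' p‖ := by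
        rw [hy, hy', mulExp_apply, mulExp_apply, ← smul_sub, norm_smul, Real.norm_eq_abs,
          abs_of_pos (Real.exp_pos _)]
      rw [this]
      have h1 : ‖w p - w' p‖ ≤ D := by
        rw [← dist_eq_norm]; exact ContinuousMap.dist_apply_le_dist p
      have h2 : Real.exp (k * ↑p) ≤ Real.exp (k * max τ 0) :=
        Real.exp_le_exp.2 (mul_le_mul_of_nonneg_left hpτ hk.le)
      exact mul_le_mul h2 h1 (norm_nonneg _) (Real.exp_pos _).le
  -- difference of the right-hand sides
  have hint : ∀ z : C(Set.Icc (0:ℝ) T, Fin n → ℂ), ∀ t : ℝ,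
      IntervalIntegrable (fun s => R (segMap h (extMap hh hT φ z) s)) volume 0 t := fun z t =>
    Continuous.intervalIntegrable (R.continuous.comp (segMap h _).continuous) _ _
  have hdiff : ∀ t : ℝ, rhsF L R hh hT φ y t - rhsF L R hh hT φ y' t
      = L (segMap h d t) + ∫ s in (0:ℝ)..t, R (segMap h d s) := by
    intro t
    have hA : L (segMap h (extMap hh hT φ y) t) - L (segMap h (extMap hh hT φ y') t)
        = L (segMap h d t) := by rw [← map_sub, ← segMap_sub]
    have hI : (∫ s in (0:ℝ)..t, R (segMap h (extMap hh hT φ y) s))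
        - (∫ s in (0:ℝ)..t, R (segMap h (extMap hh hT φ y') s))
        = ∫ s in (0:ℝ)..t, R (segMap h d s) := by
      rw [← intervalIntegral.integral_sub (hint y t) (hint y' t)]
      refine intervalIntegral.integral_congr fun s _ => ?_
      rw [← map_sub, ← segMap_sub]
    calc rhsF L R hh hT φ y t - rhsF L R hh hT φ y' t
        = (L (segMap h (extMap hh hT φ y) t) - L (segMap h (extMap hh hT φ y') t))
          + ((∫ s in (0:ℝ)..t, R (segMap h (extMap hh hT φ y) s))
            - ∫ s in (0:ℝ)..t, R (segMap h (extMap hh hT φ y') s)) := by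
          simp only [rhsF]; abel
      _ = L (segMap h d t) + ∫ s in (0:ℝ)..t, R (segMap h d s) := by rw [hA, hI]
  -- segment bounds
  have hseg : ∀ s : ℝ, 0 ≤ s → ‖segMap h d s‖ ≤ Real.exp (k * s) * D := by
    intro s hs
    rw [ContinuousMap.norm_le _ (mul_nonneg (Real.exp_pos _).le hD)]
    intro σ
    rw [segMap_apply]
    refine (hd1 _).trans (mul_le_mul_of_nonneg_right
      (Real.exp_le_exp.2 (mul_le_mul_of_nonneg_left ?_ hk.le)) hD)
    exact max_le (by linarith [σ.2.2]) hs
  have hLseg : ∀ t : ℝ, 0 ≤ t → ‖L (segMap h d t)‖ ≤ ‖L‖ * (Real.exp (k * (t - Δ)) * D) := by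
    intro t ht
    refine norm_L_apply_le L hh hΔ hL _ (mul_nonneg (Real.exp_pos _).le hD) ?_
    intro s hs
    rw [segMap_apply]
    rcases le_or_gt (t + ↑s) 0 with hts | hts
    · rw [hd0 _ hts]
      simpa using mul_nonneg (Real.exp_pos (k * (t - Δ))).le hD
    · refine (hd1 _).trans (mul_le_mul_of_nonneg_right
        (Real.exp_le_exp.2 (mul_le_mul_of_nonneg_left ?_ hk.le)) hD)
      exact max_le (by linarith) (by linarith)
  -- conclude pointwise
  have hq0 : 0 ≤ (‖L‖ * Real.exp (-(k * Δ)) + ‖R‖ / k) * D :=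
    mul_nonneg (add_nonneg (mul_nonneg (norm_nonneg L) (Real.exp_pos _).le)
      (div_nonneg (norm_nonneg R) hk.le)) hD
  refine (ContinuousMap.dist_le hq0).2 fun t => ?_
  rw [Psi_apply, Psi_apply, dist_eq_norm, ← smul_sub, norm_smul, Real.norm_eq_abs,
    abs_of_pos (Real.exp_pos _)]
  have hI2 : ‖∫ s in (0:ℝ)..(t:ℝ), R (segMap h d s)‖ ≤ ‖R‖ * D / k * Real.exp (k * ↑t) := by
    refine norm_integral_exp_le (R.continuous.comp (segMap h d).continuous) hk t.2.1
      (mul_nonneg (norm_nonneg R) hD) fun s hs => ?_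
    calc ‖R (segMap h d s)‖ ≤ ‖R‖ * ‖segMap h d s‖ := R.le_opNorm _
      _ ≤ ‖R‖ * (Real.exp (k * s) * D) :=
          mul_le_mul_of_nonneg_left (hseg s hs.1) (norm_nonneg R)
      _ = ‖R‖ * D * Real.exp (k * s) := by ring
  have hnorm : ‖rhsF L R hh hT φ y ↑t - rhsF L R hh hT φ y' ↑t‖
      ≤ ‖L‖ * (Real.exp (k * (↑t - Δ)) * D) + ‖R‖ * D / k * Real.exp (k * ↑t) := by
    rw [hdiff]
    exact (norm_add_le _ _).trans (add_le_add (hLseg ↑t t.2.1) hI2)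
  calc Real.exp (-(k * ↑t)) * ‖rhsF L R hh hT φ y ↑t - rhsF L R hh hT φ y' ↑t‖
      ≤ Real.exp (-(k * ↑t)) * (‖L‖ * (Real.exp (k * (↑t - Δ)) * D)
          + ‖R‖ * D / k * Real.exp (k * ↑t)) :=
        mul_le_mul_of_nonneg_left hnorm (Real.exp_pos _).le
    _ = ‖L‖ * D * (Real.exp (-(k * ↑t)) * Real.exp (k * (↑t - Δ)))
          + ‖R‖ * D / k * (Real.exp (-(k * ↑t)) * Real.exp (k * ↑t)) := by ring
    _ = ‖L‖ * D * Real.exp (-(k * Δ)) + ‖R‖ * D / k := by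
        rw [← Real.exp_add, ← Real.exp_add, show -(k * (t:ℝ)) + k * ((t:ℝ) - Δ) = -(k * Δ) by
          ring, show -(k * (t:ℝ)) + k * (t:ℝ) = 0 by ring, Real.exp_zero, mul_one]
    _ = (‖L‖ * Real.exp (-(k * Δ)) + ‖R‖ / k) * D := by ring

lemma dist_Psi_phi_le (hh : -h ≤ (0:ℝ)) (hT : (0:ℝ) ≤ T) (hk : 0 < k)
    (φ φ' : C(Set.Icc (-h) (0:ℝ), Fin n → ℂ)) (w : C(Set.Icc (0:ℝ) T, Fin n → ℂ)) :
    dist (Psi L R hh hT k φ w) (Psi L R hh hT k φ' w)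
      ≤ (2 * ‖L‖ + ‖R‖ / k) * dist φ φ' := by
  set D := dist φ φ' with hDdef
  have hD : 0 ≤ D := dist_nonneg
  set y := mulExp k hT w with hy
  set d : C(ℝ, Fin n → ℂ) := extMap hh hT φ y - extMap hh hT φ' y with hd
  have hd1 : ∀ τ : ℝ, ‖d τ‖ ≤ D := by
    intro τ
    have : d τ = φ (Set.projIcc (-h) 0 hh (min τ 0)) - φ' (Set.projIcc (-h) 0 hh (min τ 0)) := by
      simp [hd, extMap_apply]
    rw [this, ← dist_eq_norm]
    exact ContinuousMap.dist_apply_le_dist _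
  have hseg : ∀ s : ℝ, ‖segMap h d s‖ ≤ D := by
    intro s
    rw [ContinuousMap.norm_le _ hD]
    intro σ
    rw [segMap_apply]; exact hd1 _
  have hint : ∀ ψ : C(Set.Icc (-h) (0:ℝ), Fin n → ℂ), ∀ z, ∀ t : ℝ,
      IntervalIntegrable (fun s => R (segMap h (extMap hh hT ψ z) s)) volume 0 t := fun ψ z t =>
    Continuous.intervalIntegrable (R.continuous.comp (segMap h _).continuous) _ _
  have hdiff : ∀ t : ℝ, rhsF L R hh hT φ y t - rhsF L R hh hT φ' y t
      = L (segMap h d t) - L (φ - φ') + ∫ s in (0:ℝ)..t, R (segMap h d s) := by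
    intro t
    have hA : L (segMap h (extMap hh hT φ y) t) - L (segMap h (extMap hh hT φ' y) t)
        = L (segMap h d t) := by rw [← map_sub, ← segMap_sub]
    have hI : (∫ s in (0:ℝ)..t, R (segMap h (extMap hh hT φ y) s))
        - (∫ s in (0:ℝ)..t, R (segMap h (extMap hh hT φ' y) s))
        = ∫ s in (0:ℝ)..t, R (segMap h d s) := by
      rw [← intervalIntegral.integral_sub (hint φ y t) (hint φ' y t)]
      refine intervalIntegral.integral_congr fun s _ => ?_
      rw [← map_sub, ← segMap_sub]
    calc rhsF L R hh hT φ y t - rhsF L R hh hT φ' y t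
        = (L (segMap h (extMap hh hT φ y) t) - L (segMap h (extMap hh hT φ' y) t))
          - (L φ - L φ')
          + ((∫ s in (0:ℝ)..t, R (segMap h (extMap hh hT φ y) s))
            - ∫ s in (0:ℝ)..t, R (segMap h (extMap hh hT φ' y) s)) := by
          simp only [rhsF]; abel
      _ = L (segMap h d t) - L (φ - φ') + ∫ s in (0:ℝ)..t, R (segMap h d s) := by
          rw [hA, hI, map_sub L φ φ']
  have hq0 : 0 ≤ (2 * ‖L‖ + ‖R‖ / k) * D :=
    mul_nonneg (add_nonneg (by positivity) (div_nonneg (norm_nonneg R) hk.le)) hD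
  refine (ContinuousMap.dist_le hq0).2 fun t => ?_
  rw [Psi_apply, Psi_apply, dist_eq_norm, ← smul_sub, norm_smul, Real.norm_eq_abs,
    abs_of_pos (Real.exp_pos _)]
  have hI2 : ‖∫ s in (0:ℝ)..(t:ℝ), R (segMap h d s)‖ ≤ ‖R‖ * D / k * Real.exp (k * ↑t) := by
    refine norm_integral_exp_le (R.continuous.comp (segMap h d).continuous) hk t.2.1
      (mul_nonneg (norm_nonneg R) hD) fun s hs => ?_
    calc ‖R (segMap h d s)‖ ≤ ‖R‖ * ‖segMap h d s‖ := R.le_opNorm _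
      _ ≤ ‖R‖ * D := mul_le_mul_of_nonneg_left (hseg s) (norm_nonneg R)
      _ ≤ ‖R‖ * D * Real.exp (k * s) := by
          nlinarith [Real.one_le_exp (mul_nonneg hk.le hs.1), mul_nonneg (norm_nonneg R) hD]
  have hLφ : ‖L (φ - φ')‖ ≤ ‖L‖ * D := by
    refine (L.le_opNorm _).trans (mul_le_mul_of_nonneg_left ?_ (norm_nonneg L))
    rw [← dist_eq_norm]
  have hnorm : ‖rhsF L R hh hT φ y ↑t - rhsF L R hh hT φ' y ↑t‖
      ≤ 2 * (‖L‖ * D) + ‖R‖ * D / k * Real.exp (k * ↑t) := by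
    rw [hdiff]
    have h1 : ‖L (segMap h d ↑t)‖ ≤ ‖L‖ * D :=
      (L.le_opNorm _).trans (mul_le_mul_of_nonneg_left (hseg ↑t) (norm_nonneg L))
    calc ‖L (segMap h d ↑t) - L (φ - φ') + ∫ s in (0:ℝ)..(t:ℝ), R (segMap h d s)‖
        ≤ ‖L (segMap h d ↑t) - L (φ - φ')‖ + ‖∫ s in (0:ℝ)..(t:ℝ), R (segMap h d s)‖ :=
          norm_add_le _ _
      _ ≤ (‖L (segMap h d ↑t)‖ + ‖L (φ - φ')‖) + ‖R‖ * D / k * Real.exp (k * ↑t) :=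
          add_le_add (norm_sub_le _ _) hI2
      _ ≤ 2 * (‖L‖ * D) + ‖R‖ * D / k * Real.exp (k * ↑t) := by linarith
  have hexp1 : Real.exp (-(k * ↑t)) ≤ 1 := by
    rw [← Real.exp_zero]
    exact Real.exp_le_exp.2 (by nlinarith [t.2.1, hk.le])
  calc Real.exp (-(k * ↑t)) * ‖rhsF L R hh hT φ y ↑t - rhsF L R hh hT φ' y ↑t‖
      ≤ Real.exp (-(k * ↑t)) * (2 * (‖L‖ * D) + ‖R‖ * D / k * Real.exp (k * ↑t)) :=
        mul_le_mul_of_nonneg_left hnorm (Real.exp_pos _).le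
    _ = Real.exp (-(k * ↑t)) * (2 * (‖L‖ * D))
        + ‖R‖ * D / k * (Real.exp (-(k * ↑t)) * Real.exp (k * ↑t)) := by ring
    _ ≤ 1 * (2 * (‖L‖ * D)) + ‖R‖ * D / k * 1 := by
        rw [← Real.exp_add, show -(k * (t:ℝ)) + k * (t:ℝ) = 0 by ring, Real.exp_zero]
        have := mul_nonneg (norm_nonneg L) hD
        nlinarith [Real.exp_pos (-(k * (t:ℝ)))]
    _ = (2 * ‖L‖ + ‖R‖ / k) * D := by ring
end Op

section FP
variable (L R : C(Set.Icc (-h) (0:ℝ), Fin n → ℂ) →L[ℂ] (Fin n → ℂ))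

lemma mulExp_mulExp (hT : (0:ℝ) ≤ T) (a b : ℝ) (w : C(Set.Icc (0:ℝ) T, Fin n → ℂ)) :
    mulExp a hT (mulExp b hT w) = mulExp (a + b) hT w := by
  ext t i
  simp only [mulExp_apply, smul_smul, ← Real.exp_add, add_mul]

lemma mulExp_zero (hT : (0:ℝ) ≤ T) (w : C(Set.Icc (0:ℝ) T, Fin n → ℂ)) :
    mulExp 0 hT w = w := by
  ext t i; simp [mulExp_apply]

lemma dist_mulExp_le (hT : (0:ℝ) ≤ T) (hk : 0 ≤ k) (u u' : C(Set.Icc (0:ℝ) T, Fin n → ℂ)) :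
    dist (mulExp k hT u) (mulExp k hT u') ≤ Real.exp (k * T) * dist u u' := by
  refine (ContinuousMap.dist_le (mul_nonneg (Real.exp_pos _).le dist_nonneg)).2 fun t => ?_
  rw [mulExp_apply, mulExp_apply, dist_smul₀, Real.norm_eq_abs, abs_of_pos (Real.exp_pos _)]
  exact mul_le_mul (Real.exp_le_exp.2 (mul_le_mul_of_nonneg_left t.2.2 hk))
    (ContinuousMap.dist_apply_le_dist t) dist_nonneg (Real.exp_pos _).le

lemma rhsF_zero (hh : -h ≤ (0:ℝ)) (hT : (0:ℝ) ≤ T) (φ : C(Set.Icc (-h) (0:ℝ), Fin n → ℂ))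
    (y : C(Set.Icc (0:ℝ) T, Fin n → ℂ)) (hy : y ⟨0, Set.left_mem_Icc.2 hT⟩ = 0) :
    rhsF L R hh hT φ y 0 = 0 := by
  simp only [rhsF, intervalIntegral.integral_same, add_zero,
    seg_ext_zero hh hT φ y hy, sub_self]

lemma mapsTo_Psi (hh : -h ≤ (0:ℝ)) (hT : (0:ℝ) ≤ T) (k : ℝ)
    (φ : C(Set.Icc (-h) (0:ℝ), Fin n → ℂ)) :
    Set.MapsTo (Psi L R hh hT k φ)
      {w : C(Set.Icc (0:ℝ) T, Fin n → ℂ) | w ⟨0, Set.left_mem_Icc.2 hT⟩ = 0}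
      {w : C(Set.Icc (0:ℝ) T, Fin n → ℂ) | w ⟨0, Set.left_mem_Icc.2 hT⟩ = 0} := by
  intro w hw
  have hw' : w ⟨0, Set.left_mem_Icc.2 hT⟩ = 0 := hw
  show Psi L R hh hT k φ w ⟨0, Set.left_mem_Icc.2 hT⟩ = 0
  rw [Psi_apply]
  have h0 : rhsF L R hh hT φ (mulExp k hT w) 0 = 0 := by
    refine rhsF_zero L R hh hT φ _ ?_
    rw [mulExp_apply, hw', smul_zero]
  simp only [h0, smul_zero]

lemma exists_yT (hh : -h ≤ (0:ℝ)) (hT : (0:ℝ) ≤ T) (hΔ : Δ ∈ Set.Ioo 0 h)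
    (hL : ∀ φ : C(Set.Icc (-h) (0:ℝ), Fin n → ℂ),
      (∀ s : Set.Icc (-h) (0:ℝ), (↑s : ℝ) ≤ -Δ → φ s = 0) → L φ = 0)
    (hk : 0 < k) (hq : ‖L‖ * Real.exp (-(k * Δ)) + ‖R‖ / k < 1)
    (φ : C(Set.Icc (-h) (0:ℝ), Fin n → ℂ)) :
    ∃ y : C(Set.Icc (0:ℝ) T, Fin n → ℂ),
      y ⟨0, Set.left_mem_Icc.2 hT⟩ = 0 ∧
      (∀ t : Set.Icc (0:ℝ) T, y t = rhsF L R hh hT φ y ↑t) ∧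
      (∀ y' : C(Set.Icc (0:ℝ) T, Fin n → ℂ), y' ⟨0, Set.left_mem_Icc.2 hT⟩ = 0 →
        (∀ t : Set.Icc (0:ℝ) T, y' t = rhsF L R hh hT φ y' ↑t) → y' = y) ∧
      (∀ (φ' : C(Set.Icc (-h) (0:ℝ), Fin n → ℂ)) (y' : C(Set.Icc (0:ℝ) T, Fin n → ℂ)),
        y' ⟨0, Set.left_mem_Icc.2 hT⟩ = 0 →
        (∀ t : Set.Icc (0:ℝ) T, y' t = rhsF L R hh hT φ' y' ↑t) →
        dist y y' ≤ Real.exp (k * T) * ((2 * ‖L‖ + ‖R‖ / k) /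
          (1 - (‖L‖ * Real.exp (-(k * Δ)) + ‖R‖ / k))) * dist φ φ') := by
  classical
  set q : ℝ := ‖L‖ * Real.exp (-(k * Δ)) + ‖R‖ / k with hqdef
  have hq0 : 0 ≤ q := add_nonneg (mul_nonneg (norm_nonneg L) (Real.exp_pos _).le)
    (div_nonneg (norm_nonneg R) hk.le)
  set K : ℝ≥0 := q.toNNReal with hKdef
  have hKcoe : (K : ℝ) = q := Real.coe_toNNReal _ hq0
  set z0 : ↑(Set.Icc (0:ℝ) T) := ⟨0, Set.left_mem_Icc.2 hT⟩ with hz0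
  set S0 : Set C(Set.Icc (0:ℝ) T, Fin n → ℂ) := {w | w z0 = 0} with hS0
  have hS0c : IsComplete S0 :=
    (isClosed_eq (continuous_eval_const z0) continuous_const).isComplete
  -- contraction, for any initial datum
  have hcontr : ∀ ψ : C(Set.Icc (-h) (0:ℝ), Fin n → ℂ),
      ContractingWith K ((mapsTo_Psi L R hh hT k ψ).restrict _ _ _) := by
    intro ψ
    constructor
    · rw [← NNReal.coe_lt_coe, hKcoe, NNReal.coe_one]; exact hq
    · refine LipschitzWith.of_dist_le_mul fun x y => ?_
      rw [Subtype.dist_eq, Subtype.dist_eq, Set.MapsTo.val_restrict_apply,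
        Set.MapsTo.val_restrict_apply, hKcoe]
      exact dist_Psi_le L R hh hT hk hΔ hL ψ x.1 y.1 (x.2.trans y.2.symm)
  have h0mem : (0 : C(Set.Icc (0:ℝ) T, Fin n → ℂ)) ∈ S0 := rfl
  set wst := ContractingWith.efixedPoint' (Psi L R hh hT k φ) hS0c
    (mapsTo_Psi L R hh hT k φ) (hcontr φ) 0 h0mem (edist_ne_top _ _) with hwst
  have hmem : wst ∈ S0 := ContractingWith.efixedPoint_mem' hS0c _ _ h0mem _
  have hfix : Function.IsFixedPt (Psi L R hh hT k φ) wst :=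
    ContractingWith.efixedPoint_isFixedPt' hS0c _ _ h0mem _
  have hmem' : wst z0 = 0 := hmem
  -- the fixed point of the unconjugated operator
  refine ⟨mulExp k hT wst, ?_, ?_, ?_, ?_⟩
  · rw [mulExp_apply, hz0, hmem']; simp
  · intro t
    have h1 : mulExp k hT wst t = Real.exp (k * ↑t) • (Psi L R hh hT k φ wst t) := by
      rw [mulExp_apply, hfix.eq]
    rw [h1, Psi_apply, smul_smul, ← Real.exp_add,
      show k * (t:ℝ) + -(k * (t:ℝ)) = 0 by ring, Real.exp_zero, one_smul]
  -- uniqueness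
  · intro y' hy'0 hy'eq
    have hw'mem : mulExp (-k) hT y' ∈ S0 := by
      show mulExp (-k) hT y' z0 = 0
      rw [mulExp_apply, hy'0, smul_zero]
    have hrec : mulExp k hT (mulExp (-k) hT y') = y' := by
      rw [mulExp_mulExp, show k + -k = 0 by ring, mulExp_zero]
    have hw'fix : Psi L R hh hT k φ (mulExp (-k) hT y') = mulExp (-k) hT y' := by
      ext t
      rw [Psi_apply, hrec, ← hy'eq t, mulExp_apply]
      rw [show -k * (t:ℝ) = -(k * (t:ℝ)) by ring]
    have hueq : (⟨mulExp (-k) hT y', hw'mem⟩ : S0) = ⟨wst, hmem⟩ := by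
      refine (hcontr φ).fixedPoint_unique' ?_ ?_
      · exact Subtype.ext (by rw [Set.MapsTo.val_restrict_apply]; exact hw'fix)
      · exact Subtype.ext (by rw [Set.MapsTo.val_restrict_apply]; exact hfix.eq)
    have : mulExp (-k) hT y' = wst := congrArg Subtype.val hueq
    rw [← hrec, this]
  -- Lipschitz dependence on the datum
  · intro φ' y' hy'0 hy'eq
    have hw'mem : mulExp (-k) hT y' ∈ S0 := by
      show mulExp (-k) hT y' z0 = 0
      rw [mulExp_apply, hy'0, smul_zero]
    have hrec : mulExp k hT (mulExp (-k) hT y') = y' := by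
      rw [mulExp_mulExp, show k + -k = 0 by ring, mulExp_zero]
    have hw'fix : Psi L R hh hT k φ' (mulExp (-k) hT y') = mulExp (-k) hT y' := by
      ext t
      rw [Psi_apply, hrec, ← hy'eq t, mulExp_apply]
      rw [show -k * (t:ℝ) = -(k * (t:ℝ)) by ring]
    have hp'fix : Function.IsFixedPt ((mapsTo_Psi L R hh hT k φ').restrict _ _ _)
        (⟨mulExp (-k) hT y', hw'mem⟩ : ↥S0) :=
      Subtype.ext (by rw [Set.MapsTo.val_restrict_apply]; exact hw'fix)
    have hpfix : Function.IsFixedPt ((mapsTo_Psi L R hh hT k φ).restrict _ _ _)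
        (⟨wst, hmem⟩ : ↥S0) :=
      Subtype.ext (by rw [Set.MapsTo.val_restrict_apply]; exact hfix.eq)
    have hC : ∀ z : ↥S0, dist (((mapsTo_Psi L R hh hT k φ).restrict _ _ _) z)
        (((mapsTo_Psi L R hh hT k φ').restrict _ _ _) z)
        ≤ (2 * ‖L‖ + ‖R‖ / k) * dist φ φ' := by
      intro z
      rw [Subtype.dist_eq, Set.MapsTo.val_restrict_apply, Set.MapsTo.val_restrict_apply]
      exact dist_Psi_phi_le L R hh hT hk φ φ' z.1
    have hdist : dist (⟨wst, hmem⟩ : ↥S0) (⟨mulExp (-k) hT y', hw'mem⟩ : ↥S0)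
        ≤ ((2 * ‖L‖ + ‖R‖ / k) * dist φ φ') / (1 - K) :=
      (hcontr φ).dist_fixedPoint_fixedPoint_of_dist_le' _ hpfix hp'fix hC
    rw [Subtype.dist_eq] at hdist
    simp only at hdist
    have hdist2 : dist wst (mulExp (-k) hT y')
        ≤ ((2 * ‖L‖ + ‖R‖ / k) * dist φ φ') / (1 - q) := by rwa [hKcoe] at hdist
    calc dist (mulExp k hT wst) y'
        = dist (mulExp k hT wst) (mulExp k hT (mulExp (-k) hT y')) := by rw [hrec]
      _ ≤ Real.exp (k * T) * dist wst (mulExp (-k) hT y') := dist_mulExp_le hT hk.le _ _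
      _ ≤ Real.exp (k * T) * (((2 * ‖L‖ + ‖R‖ / k) * dist φ φ') / (1 - q)) :=
          mul_le_mul_of_nonneg_left hdist2 (Real.exp_pos _).le
      _ = Real.exp (k * T) * ((2 * ‖L‖ + ‖R‖ / k) / (1 - q)) * dist φ φ' := by
          rw [mul_assoc, div_mul_eq_mul_div]
lemma exists_good_k (hΔ : 0 < Δ) :
    ∃ k : ℝ, 0 < k ∧ ‖L‖ * Real.exp (-(k * Δ)) + ‖R‖ / k < 1 := by
  have h1 : Tendsto (fun k : ℝ => ‖L‖ * Real.exp (-(k * Δ))) atTop (𝓝 0) := by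
    have hmul : Tendsto (fun k : ℝ => -(k * Δ)) atTop atBot := by
      refine Filter.tendsto_neg_atBot_iff.2 ?_
      exact Tendsto.atTop_mul_const hΔ tendsto_id
    have := (Real.tendsto_exp_atBot.comp hmul).const_mul ‖L‖
    simpa using this
  have h2 : Tendsto (fun k : ℝ => ‖R‖ / k) atTop (𝓝 0) :=
    Tendsto.div_atTop tendsto_const_nhds tendsto_id
  have h3 := (by simpa using h1.add h2 :
      Tendsto (fun k : ℝ => ‖L‖ * Real.exp (-(k * Δ)) + ‖R‖ / k) atTop
        (𝓝 0)).eventually_lt_const one_pos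
  obtain ⟨k, hk1, hk2⟩ := (h3.and (eventually_gt_atTop 0)).exists
  exact ⟨k, hk2, hk1⟩

/-- restriction of a forward path to a shorter time interval -/
def resMap (hTT' : T ≤ T') (y : C(Set.Icc (0:ℝ) T', Fin n → ℂ)) :
    C(Set.Icc (0:ℝ) T, Fin n → ℂ) :=
  y.comp ⟨Set.inclusion (Set.Icc_subset_Icc_right hTT'),
    continuous_inclusion (Set.Icc_subset_Icc_right hTT')⟩

lemma resMap_apply (hTT' : T ≤ T') (y : C(Set.Icc (0:ℝ) T', Fin n → ℂ))
    (t : Set.Icc (0:ℝ) T) :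
    resMap hTT' y t = y ⟨t.1, ⟨t.2.1, t.2.2.trans hTT'⟩⟩ := rfl

lemma extMap_res (hh : -h ≤ (0:ℝ)) {T' : ℝ} (hT : (0:ℝ) ≤ T) (hT' : (0:ℝ) ≤ T')
    (hTT' : T ≤ T') (φ : C(Set.Icc (-h) (0:ℝ), Fin n → ℂ))
    (y : C(Set.Icc (0:ℝ) T', Fin n → ℂ)) {τ : ℝ} (hτ : τ ≤ T) :
    extMap hh hT φ (resMap hTT' y) τ = extMap hh hT' φ y τ := by
  have hm : max τ 0 ∈ Set.Icc (0:ℝ) T := ⟨le_max_right _ _, max_le hτ hT⟩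
  have hm' : max τ 0 ∈ Set.Icc (0:ℝ) T' := ⟨le_max_right _ _, max_le (hτ.trans hTT') hT'⟩
  rw [extMap_apply, extMap_apply, Set.projIcc_of_mem _ hm, Set.projIcc_of_mem _ hm']
  rfl

lemma segMap_ext_res (hh : -h ≤ (0:ℝ)) {T' : ℝ} (hT : (0:ℝ) ≤ T) (hT' : (0:ℝ) ≤ T')
    (hTT' : T ≤ T') (φ : C(Set.Icc (-h) (0:ℝ), Fin n → ℂ))
    (y : C(Set.Icc (0:ℝ) T', Fin n → ℂ)) {s : ℝ} (hs : s ≤ T) :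
    segMap h (extMap hh hT φ (resMap hTT' y)) s = segMap h (extMap hh hT' φ y) s := by
  ext σ
  rw [segMap_apply, segMap_apply, extMap_res hh hT hT' hTT' φ y (by linarith [σ.2.2])]

lemma rhsF_res (hh : -h ≤ (0:ℝ)) {T' : ℝ} (hT : (0:ℝ) ≤ T) (hT' : (0:ℝ) ≤ T')
    (hTT' : T ≤ T') (φ : C(Set.Icc (-h) (0:ℝ), Fin n → ℂ))
    (y : C(Set.Icc (0:ℝ) T', Fin n → ℂ)) {t : ℝ} (ht : t ∈ Set.Icc (0:ℝ) T) :
    rhsF L R hh hT φ (resMap hTT' y) t = rhsF L R hh hT' φ y t := by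
  simp only [rhsF]
  rw [segMap_ext_res hh hT hT' hTT' φ y ht.2]
  congr 1
  refine intervalIntegral.integral_congr fun s hs => ?_
  rw [Set.uIcc_of_le ht.1] at hs
  rw [segMap_ext_res hh hT hT' hTT' φ y (hs.2.trans ht.2)]

lemma rhsF_datum_zero (hh : -h ≤ (0:ℝ)) (hT : (0:ℝ) ≤ T) (t : ℝ) :
    rhsF L R hh hT (0 : C(Set.Icc (-h) (0:ℝ), Fin n → ℂ))
      (0 : C(Set.Icc (0:ℝ) T, Fin n → ℂ)) t = 0 := by
  have hext : extMap hh hT (0 : C(Set.Icc (-h) (0:ℝ), Fin n → ℂ))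
      (0 : C(Set.Icc (0:ℝ) T, Fin n → ℂ)) = 0 := by
    ext τ; simp [extMap_apply]
  have hseg : ∀ s : ℝ, segMap h (extMap hh hT (0 : C(Set.Icc (-h) (0:ℝ), Fin n → ℂ))
      (0 : C(Set.Icc (0:ℝ) T, Fin n → ℂ))) s = 0 := by
    intro s; ext σ; rw [segMap_apply, hext]; simp
  simp only [rhsF, hseg, map_zero, sub_self, zero_add]
  simp

lemma hasDerivAt_primitive {f : ℝ → Fin n → ℂ} (hf : Continuous f) (c : Fin n → ℂ) (t : ℝ) :
    HasDerivAt (fun τ => c + ∫ s in (0:ℝ)..τ, f s) (f t) t :=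
  (intervalIntegral.integral_hasDerivAt_right (hf.intervalIntegrable _ _)
    (hf.stronglyMeasurableAtFilter _ _) hf.continuousAt).const_add c

end FP

end Stmt14Aux

open MeasureTheory Filter Topology

set_option maxHeartbeats 2000000 in
theorem stmt_14 (n : ℕ) (h : ℝ) (hh : 0 < h)
    (L R : C(Set.Icc (-h) (0:ℝ), Fin n → ℂ) →L[ℂ] (Fin n → ℂ))
    (Δ : ℝ) (hΔ : Δ ∈ Set.Ioo 0 h)
    (hL : ∀ φ : C(Set.Icc (-h) (0:ℝ), Fin n → ℂ),
      (∀ s : Set.Icc (-h) (0:ℝ), (↑s : ℝ) ≤ -Δ → φ s = 0) → L φ = 0) :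
    ∃ sol : C(Set.Icc (-h) (0:ℝ), Fin n → ℂ) → ℝ → Fin n → ℂ,
      (∀ φ, IsNeutralSol n h L R φ (sol φ)) ∧
      (∀ φ v, IsNeutralSol n h L R φ v → ∀ t, -h ≤ t → v t = sol φ t) ∧
      (∀ t, 0 ≤ t →
        ∃ S : C(Set.Icc (-h) (0:ℝ), Fin n → ℂ) →L[ℂ]
              C(Set.Icc (-h) (0:ℝ), Fin n → ℂ),
          ∀ φ (s : Set.Icc (-h) (0:ℝ)), S φ s = sol φ (t + ↑s)) := by
  classical
  obtain ⟨hΔ0, hΔh⟩ := hΔ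
  have hI : -h ≤ (0:ℝ) := by linarith
  obtain ⟨k, hk, hq⟩ := exists_good_k L R hΔ0
  have hq0 : (0:ℝ) ≤ ‖L‖ * Real.exp (-(k * Δ)) + ‖R‖ / k :=
    add_nonneg (mul_nonneg (norm_nonneg L) (Real.exp_pos _).le)
      (div_nonneg (norm_nonneg R) hk.le)
  choose yT hy0 hyeq hyuniq hylip using
    fun (φ : C(Set.Icc (-h) (0:ℝ), Fin n → ℂ)) (T : ℝ) (hT : (0:ℝ) ≤ T) =>
      exists_yT L R hI hT ⟨hΔ0, hΔh⟩ hL hk hq φ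
  have hT0 : ∀ t : ℝ, (0:ℝ) ≤ max t 1 := fun t => zero_le_one.trans (le_max_right t 1)
  set z0I : ↑(Set.Icc (-h) (0:ℝ)) := ⟨0, Set.right_mem_Icc.2 hI⟩ with hz0I
  set vF : C(Set.Icc (-h) (0:ℝ), Fin n → ℂ) → ℝ → (Fin n → ℂ) :=
    fun φ t => extMap hI (hT0 t) φ (yT φ (max t 1) (hT0 t)) t with hvF
  have hres : ∀ φ (T T' : ℝ) (hT : (0:ℝ) ≤ T) (hT' : (0:ℝ) ≤ T') (hTT' : T ≤ T'),
      resMap hTT' (yT φ T' hT') = yT φ T hT := by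
    intro φ T T' hT hT' hTT'
    refine hyuniq φ T hT _ (hy0 φ T' hT') ?_
    intro t
    rw [resMap_apply, hyeq φ T' hT' ⟨t.1, ⟨t.2.1, t.2.2.trans hTT'⟩⟩,
      ← rhsF_res L R hI hT hT' hTT' φ _ t.2]
  have hcons : ∀ φ (t T : ℝ) (hT1 : 1 ≤ T) (htT : t ≤ T),
      vF φ t = extMap hI (zero_le_one.trans hT1) φ (yT φ T (zero_le_one.trans hT1)) t := by
    intro φ t T hT1 htT
    have hTT : max t 1 ≤ T := max_le htT hT1
    show extMap hI (hT0 t) φ (yT φ (max t 1) (hT0 t)) t = _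
    rw [← hres φ (max t 1) T (hT0 t) (zero_le_one.trans hT1) hTT,
      extMap_res hI (hT0 t) (zero_le_one.trans hT1) hTT φ _ (le_max_left t 1)]
  have hvcont : ∀ φ, Continuous (vF φ) := by
    intro φ
    rw [continuous_iff_continuousAt]
    intro t₀
    have hT1 : (1:ℝ) ≤ max (t₀ + 1) 1 := le_max_right _ _
    have hcg : ContinuousAt (fun t => extMap hI (zero_le_one.trans hT1) φ
        (yT φ (max (t₀ + 1) 1) (zero_le_one.trans hT1)) t) t₀ :=
      (extMap hI _ φ _).continuous.continuousAt
    refine hcg.congr ?_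
    refine Filter.eventuallyEq_of_mem (Iio_mem_nhds (lt_add_one t₀)) fun t ht => ?_
    exact (hcons φ t (max (t₀ + 1) 1) hT1 ((le_of_lt ht).trans (le_max_left _ _))).symm
  set vC : C(Set.Icc (-h) (0:ℝ), Fin n → ℂ) → C(ℝ, Fin n → ℂ) :=
    fun φ => ⟨vF φ, hvcont φ⟩ with hvCdef
  have hinit : ∀ φ (s : Set.Icc (-h) (0:ℝ)), vF φ ↑s = φ s := by
    intro φ s
    show extMap hI (hT0 ↑s) φ (yT φ _ _) ↑s = φ s
    rw [extMap_nonpos hI (hT0 ↑s) φ _ (hy0 φ _ _) s.2.2, Set.projIcc_of_mem hI s.2]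
  have hIE : ∀ φ (τ : ℝ), 0 ≤ τ → vF φ τ
      = φ z0I + (L (segMap h (vC φ) τ) - L φ + ∫ s in (0:ℝ)..τ, R (segMap h (vC φ) s)) := by
    intro φ τ hτ
    have hT1 : (1:ℝ) ≤ max τ 1 := le_max_right _ _
    have hT : (0:ℝ) ≤ max τ 1 := zero_le_one.trans hT1
    have hsegeq : ∀ s : ℝ, s ≤ max τ 1 →
        segMap h (extMap hI hT φ (yT φ (max τ 1) hT)) s = segMap h (vC φ) s := by
      intro s hs
      refine ContinuousMap.ext fun σ => ?_
      rw [segMap_apply, segMap_apply]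
      show _ = vF φ (s + ↑σ)
      exact (hcons φ (s + ↑σ) (max τ 1) hT1 (by linarith [σ.2.2])).symm
    have hmem : τ ∈ Set.Icc (0:ℝ) (max τ 1) := ⟨hτ, le_max_left τ 1⟩
    have h1 : vF φ τ = φ z0I + yT φ (max τ 1) hT ⟨τ, hmem⟩ := by
      rw [hcons φ τ (max τ 1) hT1 (le_max_left τ 1), extMap_of_mem hI hT φ _ hmem]
    rw [h1, hyeq φ (max τ 1) hT ⟨τ, hmem⟩]
    congr 1
    show rhsF L R hI hT φ (yT φ (max τ 1) hT) τ = _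
    simp only [rhsF]
    rw [hsegeq τ (le_max_left τ 1)]
    congr 1
    refine intervalIntegral.integral_congr fun s hs => ?_
    rw [Set.uIcc_of_le hτ] at hs
    rw [hsegeq s (hs.2.trans (le_max_left τ 1))]
  have hderiv : ∀ φ (t : ℝ), 0 ≤ t →
      HasDerivWithinAt (fun τ => vF φ τ - L (segMap h (vC φ) τ))
        (R (segMap h (vC φ) t)) (Set.Ici 0) t := by
    intro φ t ht
    have hcont : Continuous fun s => R (segMap h (vC φ) s) :=
      R.continuous.comp (segMap h (vC φ)).continuous
    have hg := (hasDerivAt_primitive hcont (φ z0I - L φ) t).hasDerivWithinAt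
      (s := Set.Ici (0:ℝ))
    refine hg.congr ?_ ?_
    · intro τ hτ
      rw [hIE φ τ hτ]
      abel
    · rw [hIE φ t ht]
      abel
  have hexist : ∀ φ, IsNeutralSol n h L R φ (vF φ) := fun φ =>
    ⟨(hvcont φ).continuousOn, hinit φ, fun t => segMap h (vC φ) t,
      fun t _ s => rfl, fun t ht => hderiv φ t ht⟩
  have huniq : ∀ φ v, IsNeutralSol n h L R φ v → ∀ t, -h ≤ t → v t = vF φ t := by
    rintro φ v ⟨hvcont', hvinit, V, hV1, hV2⟩ t ht
    have hv0 : v 0 = φ z0I := hvinit z0I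
    rcases le_or_gt t 0 with ht0 | ht0
    · rw [show t = ((⟨t, ⟨ht, ht0⟩⟩ : Set.Icc (-h) (0:ℝ)) : ℝ) from rfl, hvinit ⟨t, ⟨ht, ht0⟩⟩,
        hinit φ ⟨t, ⟨ht, ht0⟩⟩]
    · have hT1 : (1:ℝ) ≤ max t 1 := le_max_right _ _
      have hT : (0:ℝ) ≤ max t 1 := zero_le_one.trans hT1
      have hy : Continuous fun τ : Set.Icc (0:ℝ) (max t 1) => v ↑τ - φ z0I := by
        refine Continuous.sub ?_ continuous_const
        exact hvcont'.comp_continuous continuous_subtype_val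
          fun τ => Set.mem_Ici.2 (le_trans hI τ.2.1)
      set y : C(Set.Icc (0:ℝ) (max t 1), Fin n → ℂ) := ⟨fun τ => v ↑τ - φ z0I, hy⟩ with hydef
      have hy0' : y ⟨0, Set.left_mem_Icc.2 hT⟩ = 0 := by
        show v 0 - φ z0I = 0
        rw [hv0, sub_self]
      have hext : ∀ σ : ℝ, -h ≤ σ → σ ≤ max t 1 → extMap hI hT φ y σ = v σ := by
        intro σ h1 h2
        rcases le_or_gt σ 0 with h3 | h3
        · rw [extMap_nonpos hI hT φ y hy0' h3, Set.projIcc_of_mem hI ⟨h1, h3⟩]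
          exact (hvinit ⟨σ, ⟨h1, h3⟩⟩).symm
        · rw [extMap_of_mem hI hT φ y ⟨h3.le, h2⟩]
          show φ _ + (v σ - φ z0I) = v σ
          abel
      have hseg : ∀ s : ℝ, 0 ≤ s → s ≤ max t 1 →
          segMap h (extMap hI hT φ y) s = V s := by
        intro s h1 h2
        refine ContinuousMap.ext fun σ => ?_
        rw [segMap_apply, hext (s + ↑σ) (by linarith [σ.2.1]) (by linarith [σ.2.2])]
        exact (hV1 s h1 σ).symm
      have hyeq' : ∀ τ : Set.Icc (0:ℝ) (max t 1), y τ = rhsF L R hI hT φ y ↑τ := by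
        intro τ
        have hτ0 : (0:ℝ) ≤ ↑τ := τ.2.1
        have hτT : (τ:ℝ) ≤ max t 1 := τ.2.2
        set gf : ℝ → Fin n → ℂ := fun s => v s - L (segMap h (extMap hI hT φ y) s) with hgf
        have hgfc : ContinuousOn gf (Set.Icc 0 ↑τ) := by
          refine ContinuousOn.sub ?_ (L.continuous.comp (segMap h _).continuous).continuousOn
          exact hvcont'.mono fun x hx => Set.mem_Ici.2 (le_trans hI hx.1)
        have hder : ∀ x ∈ Set.Ioo (0:ℝ) (↑τ:ℝ), HasDerivWithinAt gf
            (R (segMap h (extMap hI hT φ y) x)) (Set.Ioi x) x := by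
          intro x hx
          have hder0 := (hV2 x hx.1.le).mono
            (fun z (hz : z ∈ Set.Ioi x) => Set.mem_Ici.2 (hx.1.trans hz).le)
          rw [hseg x hx.1.le (hx.2.le.trans hτT)]
          refine hder0.congr_of_eventuallyEq ?_ ?_
          · have hmem1 : Set.Iio (max t 1) ∈ 𝓝[Set.Ioi x] x :=
              mem_nhdsWithin_of_mem_nhds (Iio_mem_nhds (lt_of_lt_of_le hx.2 hτT))
            refine Filter.eventually_of_mem (Filter.inter_mem hmem1 self_mem_nhdsWithin)
              fun σ hσ => ?_
            show v σ - L (segMap h (extMap hI hT φ y) σ) = v σ - L (V σ)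
            rw [hseg σ (hx.1.trans hσ.2).le hσ.1.le]
          · show v x - L (segMap h (extMap hI hT φ y) x) = v x - L (V x)
            rw [hseg x hx.1.le (hx.2.le.trans hτT)]
        have hint : IntervalIntegrable (fun s => R (segMap h (extMap hI hT φ y) s))
            volume 0 ↑τ :=
          (R.continuous.comp (segMap h _).continuous).intervalIntegrable _ _
        have hFTC := intervalIntegral.integral_eq_sub_of_hasDeriv_right_of_le hτ0 hgfc hder hint
        have hgf0 : gf 0 = φ z0I - L φ := by
          show v 0 - L (segMap h (extMap hI hT φ y) 0) = _
          rw [seg_ext_zero hI hT φ y hy0', hv0]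
        have h5 : gf ↑τ = gf 0 + ∫ s in (0:ℝ)..(↑τ:ℝ), R (segMap h (extMap hI hT φ y) s) := by
          rw [hFTC]; abel
        show v ↑τ - φ z0I = rhsF L R hI hT φ y ↑τ
        simp only [rhsF]
        calc v ↑τ - φ z0I
            = gf ↑τ + L (segMap h (extMap hI hT φ y) ↑τ) - φ z0I := by
              simp only [hgf]; abel
          _ = (φ z0I - L φ + ∫ s in (0:ℝ)..(↑τ:ℝ), R (segMap h (extMap hI hT φ y) s))
              + L (segMap h (extMap hI hT φ y) ↑τ) - φ z0I := by rw [h5, hgf0]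
          _ = L (segMap h (extMap hI hT φ y) ↑τ) - L φ
              + ∫ s in (0:ℝ)..(↑τ:ℝ), R (segMap h (extMap hI hT φ y) s) := by abel
      have hyy := hyuniq φ (max t 1) hT y hy0' hyeq'
      rw [← hext t (by linarith) (le_max_left t 1), hyy,
        ← hcons φ t (max t 1) hT1 (le_max_left t 1)]
  refine ⟨vF, hexist, huniq, ?_⟩
  intro t ht
  have hT1 : (1:ℝ) ≤ max t 1 := le_max_right _ _
  have hT : (0:ℝ) ≤ max t 1 := zero_le_one.trans hT1
  set CT : ℝ := Real.exp (k * max t 1) * ((2 * ‖L‖ + ‖R‖ / k) /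
    (1 - (‖L‖ * Real.exp (-(k * Δ)) + ‖R‖ / k))) with hCT
  have hCT0 : 0 ≤ CT := mul_nonneg (Real.exp_pos _).le (div_nonneg
    (add_nonneg (by positivity) (div_nonneg (norm_nonneg R) hk.le)) (by linarith))
  have hyTnorm : ∀ φ, ‖yT φ (max t 1) hT‖ ≤ CT * ‖φ‖ := by
    intro φ
    have h0 := hylip φ (max t 1) hT 0 0 rfl
      (fun t' => by simp [rhsF_datum_zero L R hI hT])
    simpa [dist_zero_right] using h0
  have hadd : ∀ φ ψ (τ : ℝ), -h ≤ τ → vF (φ + ψ) τ = vF φ τ + vF ψ τ := by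
    intro φ ψ τ hτ
    have hsol : IsNeutralSol n h L R (φ + ψ) (fun σ => vF φ σ + vF ψ σ) := by
      refine ⟨((hvcont φ).add (hvcont ψ)).continuousOn, ?_,
        fun σ => segMap h (vC φ) σ + segMap h (vC ψ) σ, ?_, ?_⟩
      · intro s; simp [hinit]
      · intro σ _ s; rfl
      · intro σ hσ
        have h1 := (hderiv φ σ hσ).add (hderiv ψ σ hσ)
        have heq : (fun τ' => (vF φ τ' - L (segMap h (vC φ) τ'))
              + (vF ψ τ' - L (segMap h (vC ψ) τ')))
            = fun τ' => (vF φ τ' + vF ψ τ')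
              - L (segMap h (vC φ) τ' + segMap h (vC ψ) τ') := by
          funext τ'
          rw [map_add]; abel
        change HasDerivWithinAt (fun τ' => (vF φ τ' - L (segMap h (vC φ) τ'))
              + (vF ψ τ' - L (segMap h (vC ψ) τ'))) _ _ _ at h1
        rw [heq, ← map_add R] at h1
        exact h1
    exact (huniq (φ + ψ) _ hsol τ hτ).symm
  have hsmul : ∀ (c : ℂ) φ (τ : ℝ), -h ≤ τ → vF (c • φ) τ = c • vF φ τ := by
    intro c φ τ hτ
    have hsol : IsNeutralSol n h L R (c • φ) (fun σ => c • vF φ σ) := by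
      refine ⟨((hvcont φ).const_smul c).continuousOn, ?_,
        fun σ => c • segMap h (vC φ) σ, ?_, ?_⟩
      · intro s
        show c • vF φ ↑s = (c • φ) s
        rw [hinit φ s]; rfl
      · intro σ _ s; rfl
      · intro σ hσ
        have h1 := (hderiv φ σ hσ).const_smul c
        have heq : (fun τ' => c • (vF φ τ' - L (segMap h (vC φ) τ')))
            = fun τ' => c • vF φ τ' - L (c • segMap h (vC φ) τ') := by
          funext τ'
          rw [_root_.map_smul L c, smul_sub]
        change HasDerivWithinAt (fun τ' => c • (vF φ τ' - L (segMap h (vC φ) τ'))) _ _ _ at h1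
        rw [heq, ← _root_.map_smul R c] at h1
        exact h1
    exact (huniq (c • φ) _ hsol τ hτ).symm
  have hvFb : ∀ φ (σ : ℝ), σ ≤ max t 1 → ‖vF φ σ‖ ≤ ‖φ‖ + CT * ‖φ‖ := by
    intro φ σ hσ
    rcases le_or_gt σ 0 with h1 | h1
    · have h2 : vF φ σ = φ (Set.projIcc (-h) 0 hI σ) := by
        show extMap hI (hT0 σ) φ (yT φ _ _) σ = _
        rw [extMap_nonpos hI (hT0 σ) φ _ (hy0 φ _ _) h1]
      rw [h2]
      have := ContinuousMap.norm_coe_le_norm φ (Set.projIcc (-h) 0 hI σ)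
      have h3 : 0 ≤ CT * ‖φ‖ := mul_nonneg hCT0 (norm_nonneg φ)
      linarith
    · have hmem : σ ∈ Set.Icc (0:ℝ) (max t 1) := ⟨h1.le, hσ⟩
      rw [hcons φ σ (max t 1) hT1 hσ, extMap_of_mem hI _ φ _ hmem]
      refine (norm_add_le _ _).trans (add_le_add (ContinuousMap.norm_coe_le_norm φ _) ?_)
      exact (ContinuousMap.norm_coe_le_norm _ _).trans (hyTnorm φ)
  have hcontS : ∀ φ, Continuous fun s : Set.Icc (-h) (0:ℝ) => vF φ (t + ↑s) :=
    fun φ => (hvcont φ).comp (continuous_const.add continuous_subtype_val)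
  set Stoy : C(Set.Icc (-h) (0:ℝ), Fin n → ℂ) →ₗ[ℂ] C(Set.Icc (-h) (0:ℝ), Fin n → ℂ) :=
    { toFun := fun φ => ⟨fun s => vF φ (t + ↑s), hcontS φ⟩,
      map_add' := by
        intro φ ψ
        refine ContinuousMap.ext fun s => ?_
        show vF (φ + ψ) (t + ↑s) = _
        rw [hadd φ ψ (t + ↑s) (by linarith [s.2.1])]
        rfl,
      map_smul' := by
        intro c φ
        refine ContinuousMap.ext fun s => ?_
        show vF (c • φ) (t + ↑s) = _
        rw [hsmul c φ (t + ↑s) (by linarith [s.2.1])]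
        rfl } with hStoy
  refine ⟨Stoy.mkContinuous (1 + CT) ?_, fun φ s => rfl⟩
  intro φ
  show ‖(⟨fun s => vF φ (t + ↑s), hcontS φ⟩ : C(Set.Icc (-h) (0:ℝ), Fin n → ℂ))‖
    ≤ (1 + CT) * ‖φ‖
  rw [ContinuousMap.norm_le _ (mul_nonneg (by linarith) (norm_nonneg φ))]
  intro s
  have hb := hvFb φ (t + ↑s) (by
    have := s.2.2
    have := le_max_left t 1
    linarith)
  calc ‖vF φ (t + ↑s)‖ ≤ ‖φ‖ + CT * ‖φ‖ := hb
    _ = (1 + CT) * ‖φ‖ := by ring
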